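/- arXiv:1902.06901 — 2 statements merged into one kernel-verified Lean document; each statement's English description precedes it below -/
import Mathlib

section
/- Let X be a locally compact, connected Hausdorff space, let ρ be a quasi-integral on C_c(X), and suppose the corresponding compact-finite topological measure μ_ρ assumes more than two values (i.e., its image on the open and closed subsets of X has more than two elements). Then there exist functions f₁, f₂ ∈ C_c(X) with f₁ ≥ 0, f₂ ≥ 0, f₁·f₂ = 0, and ρ(f₁) = ρ(f₂) = 1. -/
open scoped ENNReal CompactlySupported
open CompactlySupportedContinuousMap

namespace QLF

variable {X Y : Type*}

/-- Membership in the singly generated subalgebra `B(f)`: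
`g ∈ B(f)` iff `g = φ ∘ f` for some continuous `φ` with `φ 0 = 0`. -/
def InB [TopologicalSpace X] (f g : C_c(X, ℝ)) : Prop :=
  ∃ φ : C(ℝ, ℝ), φ 0 = 0 ∧ ∀ x, g x = φ (f x)

/-- A quasi-integral (quasi-linear functional) on `C_c(X)`. -/
structure IsQuasiIntegral [TopologicalSpace X] (ρ : C_c(X, ℝ) → ℝ) : Prop where
  smul : ∀ (a : ℝ) (f : C_c(X, ℝ)), ρ (a • f) = a * ρ f
  add : ∀ f g h : C_c(X, ℝ), InB f g → InB f h → ρ (g + h) = ρ g + ρ h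
  pos : ∀ f : C_c(X, ℝ), (∀ x, 0 ≤ f x) → 0 ≤ ρ f

/-- The value of the topological measure corresponding to `ρ` on an open set. -/
noncomputable def qiOpen [TopologicalSpace X] (ρ : C_c(X, ℝ) → ℝ) (U : Set X) : ℝ≥0∞ :=
  ⨆ (f : C_c(X, ℝ)) (_ : (∀ x, 0 ≤ f x ∧ f x ≤ 1) ∧ tsupport f ⊆ U), ENNReal.ofReal (ρ f)

open Classical in
/-- The topological measure corresponding to a quasi-integral `ρ`:
on open sets given by `qiOpen`, on other (closed) sets by outer regularity. -/
noncomputable def qiMeas [TopologicalSpace X] (ρ : C_c(X, ℝ) → ℝ) (A : Set X) : ℝ≥0∞ :=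
  if IsOpen A then qiOpen ρ A
  else ⨅ (U : Set X) (_ : IsOpen U ∧ A ⊆ U), qiOpen ρ U

/-- A topological measure on `X` (as a set function on all sets; only its values on
open and closed sets are constrained/meaningful). -/
def IsTopMeasure [TopologicalSpace X] (μ : Set X → ℝ≥0∞) : Prop :=
  (∀ A B : Set X, Disjoint A B → (IsCompact A ∨ IsOpen A) → (IsCompact B ∨ IsOpen B) →
      (IsCompact (A ∪ B) ∨ IsOpen (A ∪ B)) → μ (A ∪ B) = μ A + μ B) ∧
  (∀ U : Set X, IsOpen U → μ U = ⨆ (K : Set X) (_ : IsCompact K ∧ K ⊆ U), μ K) ∧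
  (∀ F : Set X, IsClosed F → μ F = ⨅ (U : Set X) (_ : IsOpen U ∧ F ⊆ U), μ U)

/-- A simple topological measure: assumes only the values 0 and 1 on open and closed sets. -/
def IsSimpleTM [TopologicalSpace X] (μ : Set X → ℝ≥0∞) : Prop :=
  IsTopMeasure μ ∧ ∀ A : Set X, IsOpen A ∨ IsClosed A → μ A = 0 ∨ μ A = 1

/-- A simple quasi-integral: its corresponding topological measure assumes only 0 and 1. -/
def IsSimpleQI [TopologicalSpace X] (ρ : C_c(X, ℝ) → ℝ) : Prop :=
  ∀ A : Set X, IsOpen A ∨ IsClosed A → qiMeas ρ A = 0 ∨ qiMeas ρ A = 1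

/-- An almost simple quasi-integral: its corresponding topological measure is a positive
scalar multiple of a simple topological measure. -/
def IsAlmostSimpleQI [TopologicalSpace X] (ρ : C_c(X, ℝ) → ℝ) : Prop :=
  ∃ (c : ℝ≥0∞) (μ' : Set X → ℝ≥0∞), 0 < c ∧ c ≠ ∞ ∧ IsSimpleTM μ' ∧
    ∀ A : Set X, IsOpen A ∨ IsClosed A → qiMeas ρ A = c * μ' A

/-- The composition `φ ∘ f` as an element of `C_c(X, ℝ)`, for continuous `φ` with `φ 0 = 0`. -/
noncomputable def compCc [TopologicalSpace X] (φ : C(ℝ, ℝ)) (hφ : φ 0 = 0)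
    (f : C_c(X, ℝ)) : C_c(X, ℝ) :=
  ⟨⟨fun x => φ (f x), φ.continuous.comp f.continuous⟩, f.hasCompactSupport'.comp_left hφ⟩

section Products

variable [TopologicalSpace X] [TopologicalSpace Y]

/-- The section `f_y ∈ C_c(X)` of `f ∈ C_c(X × Y)`, `f_y (x) = f (x, y)`. -/
noncomputable def fiberY [T2Space X] (f : C_c(X × Y, ℝ)) (y : Y) : C_c(X, ℝ) :=
  ⟨⟨fun x => f (x, y), f.continuous.comp (continuous_id.prodMk continuous_const)⟩,
    HasCompactSupport.intro (f.hasCompactSupport'.image continuous_fst)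
      (fun x hx => by
        by_contra h
        exact hx ⟨(x, y), subset_tsupport _ h, rfl⟩)⟩

/-- The section `f_x ∈ C_c(Y)` of `f ∈ C_c(X × Y)`, `f_x (y) = f (x, y)`. -/
noncomputable def fiberX [T2Space Y] (f : C_c(X × Y, ℝ)) (x : X) : C_c(Y, ℝ) :=
  ⟨⟨fun y => f (x, y), f.continuous.comp (continuous_const.prodMk continuous_id)⟩,
    HasCompactSupport.intro (f.hasCompactSupport'.image continuous_snd)
      (fun y hy => by
        by_contra h
        exact hy ⟨(x, y), subset_tsupport _ h, rfl⟩)⟩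

/-- `T_ρ(f) (y) = ρ (f_y)` as a bare function on `Y`. -/
noncomputable def Tmap [T2Space X] (ρ : C_c(X, ℝ) → ℝ) (f : C_c(X × Y, ℝ)) : Y → ℝ :=
  fun y => ρ (fiberY f y)

/-- `S_η(f) (x) = η (f_x)` as a bare function on `X`. -/
noncomputable def Smap [T2Space Y] (η : C_c(Y, ℝ) → ℝ) (f : C_c(X × Y, ℝ)) : X → ℝ :=
  fun x => η (fiberX f x)

open Classical in
/-- `T_ρ(f)` as an element of `C_c(Y, ℝ)` (when `ρ` is a quasi-integral, `T_ρ(f)` is indeed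
continuous with compact support, and this definition takes the first branch). -/
noncomputable def TCc [T2Space X] (ρ : C_c(X, ℝ) → ℝ) (f : C_c(X × Y, ℝ)) : C_c(Y, ℝ) :=
  if h : Continuous (Tmap ρ f) ∧ HasCompactSupport (Tmap ρ f)
  then ⟨⟨Tmap ρ f, h.1⟩, h.2⟩ else 0

open Classical in
/-- `S_η(f)` as an element of `C_c(X, ℝ)`. -/
noncomputable def SCc [T2Space Y] (η : C_c(Y, ℝ) → ℝ) (f : C_c(X × Y, ℝ)) : C_c(X, ℝ) :=
  if h : Continuous (Smap η f) ∧ HasCompactSupport (Smap η f)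
  then ⟨⟨Smap η f, h.1⟩, h.2⟩ else 0

/-- The repeated quasi-integral `(η × ρ) (f) = η (T_ρ (f))`. -/
noncomputable def prodQI [T2Space X] (η : C_c(Y, ℝ) → ℝ) (ρ : C_c(X, ℝ) → ℝ) :
    C_c(X × Y, ℝ) → ℝ := fun f => η (TCc ρ f)

/-- The repeated quasi-integral `(ρ × η) (f) = ρ (S_η (f))`. -/
noncomputable def prodQI' [T2Space Y] (ρ : C_c(X, ℝ) → ℝ) (η : C_c(Y, ℝ) → ℝ) :
    C_c(X × Y, ℝ) → ℝ := fun f => ρ (SCc η f)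

/-- The tensor product `(g ⊗ h) (x, y) = g (x) * h (y)` as an element of `C_c(X × Y, ℝ)`. -/
noncomputable def tensor (g : C_c(X, ℝ)) (h : C_c(Y, ℝ)) : C_c(X × Y, ℝ) :=
  ⟨⟨fun p => g p.1 * h p.2,
      (g.continuous.comp continuous_fst).mul (h.continuous.comp continuous_snd)⟩,
    HasCompactSupport.intro' (g.hasCompactSupport'.prod h.hasCompactSupport')
      ((isClosed_tsupport _).prod (isClosed_tsupport _))
      (fun p hp => by
        rcases not_and_or.mp (by simpa [Set.mem_prod] using hp) with h1 | h1
        · simp [image_eq_zero_of_notMem_tsupport h1]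
        · simp [image_eq_zero_of_notMem_tsupport h1])⟩

end Products

/-- A topological measure is subadditive (equivalently, extends to a Borel measure). -/
def IsSubadditiveOnOpens [TopologicalSpace X] (μ : Set X → ℝ≥0∞) : Prop :=
  ∀ U V : Set X, IsOpen U → IsOpen V → μ (U ∪ V) ≤ μ U + μ V

/-- `μ` is a positive scalar multiple of a point mass `δ_{x₀}` (on open and closed sets). -/
def IsPointMassMultiple [TopologicalSpace X] (μ : Set X → ℝ≥0∞) : Prop :=
  ∃ (c : ℝ≥0∞) (x₀ : X), 0 < c ∧ c ≠ ∞ ∧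
    ∀ A : Set X, IsOpen A ∨ IsClosed A →
      μ A = c * A.indicator (fun _ => (1 : ℝ≥0∞)) x₀

end QLF

namespace QLF

section Aux

variable {X : Type*} [TopologicalSpace X]

lemma qi_zero (ρ : C_c(X, ℝ) → ℝ) (hρ : IsQuasiIntegral ρ) : ρ 0 = 0 := by
  have h := hρ.smul 0 0
  rwa [zero_smul, zero_mul] at h

/-- Key comparison lemma: if `b = 1` on the support of `h` and `0 ≤ h ≤ 1`, `0 ≤ b ≤ 1`,
then `ρ b = ρ h + ρ (b - h)`. -/
lemma qi_key (ρ : C_c(X, ℝ) → ℝ) (hρ : IsQuasiIntegral ρ) (h b : C_c(X, ℝ))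
    (h0 : ∀ x, 0 ≤ h x) (h1 : ∀ x, h x ≤ 1) (b0 : ∀ x, 0 ≤ b x) (b1 : ∀ x, b x ≤ 1)
    (hb : ∀ x, h x ≠ 0 → b x = 1) : ρ b = ρ h + ρ (b - h) := by
  have φcont : Continuous fun t : ℝ => max (t - 1) 0 := by fun_prop
  have ψcont : Continuous fun t : ℝ => min t 1 - max (t - 1) 0 := by fun_prop
  have hInB1 : InB (h + b) h := by
    refine ⟨⟨fun t => max (t - 1) 0, φcont⟩, by norm_num, fun x => ?_⟩
    simp only [ContinuousMap.coe_mk, CompactlySupportedContinuousMap.add_apply]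
    rcases eq_or_ne (h x) 0 with hx | hx
    · rw [hx, zero_add]
      exact (max_eq_right (by linarith [b1 x])).symm
    · rw [hb x hx, show h x + 1 - 1 = h x by ring]
      exact (max_eq_left (h0 x)).symm
  have hInB2 : InB (h + b) (b - h) := by
    refine ⟨⟨fun t => min t 1 - max (t - 1) 0, ψcont⟩, by norm_num, fun x => ?_⟩
    simp only [ContinuousMap.coe_mk, CompactlySupportedContinuousMap.add_apply,
      CompactlySupportedContinuousMap.sub_apply]
    rcases eq_or_ne (h x) 0 with hx | hx
    · rw [hx, zero_add, sub_zero, min_eq_left (b1 x),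
        max_eq_right (by linarith [b1 x] : b x - 1 ≤ 0), sub_zero]
    · rw [hb x hx, min_eq_right (by linarith [h0 x] : (1:ℝ) ≤ h x + 1),
        show h x + 1 - 1 = h x by ring, max_eq_left (h0 x)]
  have key := hρ.add (h + b) h (b - h) hInB1 hInB2
  rwa [show h + (b - h) = b by abel] at key

lemma qi_le (ρ : C_c(X, ℝ) → ℝ) (hρ : IsQuasiIntegral ρ) (h b : C_c(X, ℝ))
    (h0 : ∀ x, 0 ≤ h x) (h1 : ∀ x, h x ≤ 1) (b0 : ∀ x, 0 ≤ b x) (b1 : ∀ x, b x ≤ 1)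
    (hb : ∀ x, h x ≠ 0 → b x = 1) : ρ h ≤ ρ b := by
  have key := qi_key ρ hρ h b h0 h1 b0 b1 hb
  have pos : 0 ≤ ρ (b - h) := by
    refine hρ.pos _ fun x => ?_
    rw [CompactlySupportedContinuousMap.sub_apply]
    rcases eq_or_ne (h x) 0 with hx | hx
    · rw [hx, sub_zero]; exact b0 x
    · rw [hb x hx]; linarith [h1 x]
  linarith

lemma qiOpen_mono (ρ : C_c(X, ℝ) → ℝ) {U V : Set X} (hUV : U ⊆ V) :
    qiOpen ρ U ≤ qiOpen ρ V := by
  refine iSup₂_le fun f hf => ?_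
  exact le_iSup₂_of_le f ⟨hf.1, hf.2.trans hUV⟩ le_rfl

lemma qiOpen_pos_witness (ρ : C_c(X, ℝ) → ℝ) {U : Set X} (hpos : 0 < qiOpen ρ U) :
    ∃ f : C_c(X, ℝ), (∀ x, 0 ≤ f x ∧ f x ≤ 1) ∧ tsupport f ⊆ U ∧ 0 < ρ f := by
  by_contra hcon
  push_neg at hcon
  refine absurd ?_ (not_le.mpr hpos)
  refine iSup₂_le fun f hf => ?_
  exact le_of_eq (ENNReal.ofReal_eq_zero.mpr (hcon f hf.1 hf.2))

open scoped ENNReal in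
lemma exists_mid {a b c t : ℝ≥0∞} (hab : a ≠ b) (hbc : b ≠ c) (hac : a ≠ c)
    (ha : a ≤ t) (hb : b ≤ t) (hc : c ≤ t) :
    ∃ m, (m = a ∨ m = b ∨ m = c) ∧ 0 < m ∧ m < t := by
  rcases hab.lt_or_gt with h1 | h1 <;> rcases hbc.lt_or_gt with h2 | h2 <;>
    rcases hac.lt_or_gt with h3 | h3
  · exact ⟨b, Or.inr (Or.inl rfl), lt_of_le_of_lt zero_le h1, lt_of_lt_of_le h2 hc⟩
  · exact absurd (h1.trans h2) h3.asymm
  · exact ⟨c, Or.inr (Or.inr rfl), lt_of_le_of_lt zero_le h3, lt_of_lt_of_le h2 hb⟩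
  · exact ⟨a, Or.inl rfl, lt_of_le_of_lt zero_le h3, lt_of_lt_of_le h1 hb⟩
  · exact ⟨a, Or.inl rfl, lt_of_le_of_lt zero_le h1, lt_of_lt_of_le h3 hc⟩
  · exact ⟨c, Or.inr (Or.inr rfl), lt_of_le_of_lt zero_le h2, lt_of_lt_of_le h3 ha⟩
  · exact absurd (h2.trans h1) h3.asymm
  · exact ⟨b, Or.inr (Or.inl rfl), lt_of_le_of_lt zero_le h2, lt_of_lt_of_le h1 ha⟩

end Aux

end QLF
namespace QLF

section Urysohn

variable {X : Type*} [TopologicalSpace X] [LocallyCompactSpace X] [T2Space X]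

/-- Urysohn-type lemma packaged for `C_c`. -/
lemma exists_urysohnCc {K U : Set X} (hK : IsCompact K) (hU : IsOpen U) (hKU : K ⊆ U) :
    ∃ w : C_c(X, ℝ), (∀ x ∈ K, w x = 1) ∧ tsupport w ⊆ U ∧ ∀ x, 0 ≤ w x ∧ w x ≤ 1 := by
  obtain ⟨L, Lcomp, Lclosed, hKL, hLU⟩ := exists_compact_closed_between hK hU hKU
  have hd : Disjoint K (interior L)ᶜ := Set.disjoint_compl_right_iff_subset.mpr hKL
  obtain ⟨w, hw1, hw0, hwcs, hw01⟩ :=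
    exists_continuous_one_zero_of_isCompact hK isOpen_interior.isClosed_compl hd
  have hsupp : Function.support w ⊆ interior L := by
    intro x hx
    by_contra hxL
    exact hx (hw0 hxL)
  refine ⟨⟨w, hwcs⟩, fun x hx => by simpa using hw1 hx, ?_, fun x => ⟨(hw01 x).1, (hw01 x).2⟩⟩
  have : tsupport (⇑w) ⊆ L :=
    closure_minimal (hsupp.trans interior_subset) Lclosed
  exact this.trans hLU

end Urysohn

end QLF
namespace QLF
theorem statement0 {X : Type*} [TopologicalSpace X] [LocallyCompactSpace X] [T2Space X]
    [ConnectedSpace X] (ρ : C_c(X, ℝ) → ℝ) (hρ : IsQuasiIntegral ρ)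
    (hvals : ∃ A B C : Set X, (IsOpen A ∨ IsClosed A) ∧ (IsOpen B ∨ IsClosed B) ∧
      (IsOpen C ∨ IsClosed C) ∧ qiMeas ρ A ≠ qiMeas ρ B ∧
      qiMeas ρ B ≠ qiMeas ρ C ∧ qiMeas ρ A ≠ qiMeas ρ C) :
    ∃ f₁ f₂ : C_c(X, ℝ), (∀ x, 0 ≤ f₁ x) ∧ (∀ x, 0 ≤ f₂ x) ∧
      (∀ x, f₁ x * f₂ x = 0) ∧ ρ f₁ = 1 ∧ ρ f₂ = 1 := by
  classical
  obtain ⟨A, B, C, hA, hB, hC, hab, hbc, hac⟩ := hvals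
  set T := qiOpen ρ (Set.univ : Set X) with hT
  have hle : ∀ S : Set X, (IsOpen S ∨ IsClosed S) → qiMeas ρ S ≤ T := by
    intro S _
    by_cases hSo : IsOpen S
    · rw [qiMeas, if_pos hSo]; exact qiOpen_mono ρ (Set.subset_univ S)
    · rw [qiMeas, if_neg hSo]
      exact iInf_le_of_le Set.univ (iInf_le_of_le ⟨isOpen_univ, Set.subset_univ S⟩ le_rfl)
  obtain ⟨m, hm, hm0, hmT⟩ := exists_mid hab hbc hac (hle A hA) (hle B hB) (hle C hC)
  have hmS : ∃ S : Set X, (IsOpen S ∨ IsClosed S) ∧ qiMeas ρ S = m := by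
    rcases hm with h | h | h
    exacts [⟨A, hA, h.symm⟩, ⟨B, hB, h.symm⟩, ⟨C, hC, h.symm⟩]
  obtain ⟨S, hS, hSm⟩ := hmS
  have hUex : ∃ U : Set X, IsOpen U ∧ 0 < qiOpen ρ U ∧ qiOpen ρ U < T := by
    by_cases hSo : IsOpen S
    · rw [qiMeas, if_pos hSo] at hSm
      exact ⟨S, hSo, hSm ▸ hm0, hSm ▸ hmT⟩
    · rw [qiMeas, if_neg hSo] at hSm
      have hlt : (⨅ (V : Set X) (_ : IsOpen V ∧ S ⊆ V), qiOpen ρ V) < T := hSm ▸ hmT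
      obtain ⟨V, hV, hVT⟩ : ∃ V : Set X, (IsOpen V ∧ S ⊆ V) ∧ qiOpen ρ V < T := by
        by_contra hcon
        push_neg at hcon
        exact absurd hlt (not_lt.mpr (le_iInf₂ fun V hV => hcon V hV))
      have hmV : m ≤ qiOpen ρ V := hSm ▸ iInf₂_le V hV
      exact ⟨V, hV.1, lt_of_lt_of_le hm0 hmV, hVT⟩
  obtain ⟨U, hUo, hU0, hUT⟩ := hUex
  obtain ⟨f, hf01, hfU, hfpos⟩ := qiOpen_pos_witness ρ hU0
  by_contra hcon
  push_neg at hcon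
  have hN : ∀ g : C_c(X, ℝ), (∀ x, 0 ≤ g x) → (∀ x, f x * g x = 0) → ρ g = 0 := by
    intro g hg0 hfg
    refine le_antisymm ?_ (hρ.pos g hg0)
    by_contra hg
    push_neg at hg
    have hf1 : ρ ((ρ f)⁻¹ • f) = 1 := by
      rw [hρ.smul]; exact inv_mul_cancel₀ (ne_of_gt hfpos)
    have hg1 : ρ ((ρ g)⁻¹ • g) = 1 := by
      rw [hρ.smul]; exact inv_mul_cancel₀ (ne_of_gt hg)
    refine hcon ((ρ f)⁻¹ • f) ((ρ g)⁻¹ • g) ?_ ?_ ?_ hf1 hg1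
    · intro x
      rw [CompactlySupportedContinuousMap.smul_apply, smul_eq_mul]
      exact mul_nonneg (inv_nonneg.mpr hfpos.le) (hf01 x).1
    · intro x
      rw [CompactlySupportedContinuousMap.smul_apply, smul_eq_mul]
      exact mul_nonneg (inv_nonneg.mpr hg.le) (hg0 x)
    · intro x
      rw [CompactlySupportedContinuousMap.smul_apply, CompactlySupportedContinuousMap.smul_apply,
        smul_eq_mul, smul_eq_mul]
      linear_combination ((ρ f)⁻¹ * (ρ g)⁻¹) * hfg x
  have hK : IsCompact (tsupport (⇑f)) := f.hasCompactSupport'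
  obtain ⟨w, hwK, hwU, hw01⟩ := exists_urysohnCc hK hUo hfU
  have hfinal : T ≤ qiOpen ρ U := by
    refine iSup₂_le fun h hh => ?_
    have hcomp : IsCompact (tsupport (⇑h) ∪ tsupport (⇑w)) :=
      h.hasCompactSupport'.union w.hasCompactSupport'
    obtain ⟨b, hb1, hb0, hbcs, hb01⟩ :=
      exists_continuous_one_zero_of_isCompact hcomp isClosed_empty (Set.disjoint_empty _)
    set bc : C_c(X, ℝ) := ⟨b, hbcs⟩ with hbcdef
    have hbc1 : ∀ x ∈ tsupport (⇑h) ∪ tsupport (⇑w), bc x = 1 := fun x hx => by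
      exact hb1 hx
    have hb01' : ∀ x, 0 ≤ bc x ∧ bc x ≤ 1 := fun x => ⟨(hb01 x).1, (hb01 x).2⟩
    have step1 : ρ h ≤ ρ bc :=
      qi_le ρ hρ h bc (fun x => (hh.1 x).1) (fun x => (hh.1 x).2)
        (fun x => (hb01' x).1) (fun x => (hb01' x).2)
        (fun x hx => hbc1 x (Set.mem_union_left _ (subset_tsupport _ hx)))
    have step2 : ρ bc = ρ w + ρ (bc - w) :=
      qi_key ρ hρ w bc (fun x => (hw01 x).1) (fun x => (hw01 x).2)
        (fun x => (hb01' x).1) (fun x => (hb01' x).2)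
        (fun x hx => hbc1 x (Set.mem_union_right _ (subset_tsupport _ hx)))
    have step3 : ρ (bc - w) = 0 := by
      refine hN (bc - w) ?_ ?_
      · intro x
        rw [CompactlySupportedContinuousMap.sub_apply]
        rcases eq_or_ne (w x) 0 with hx | hx
        · rw [hx, sub_zero]; exact (hb01' x).1
        · rw [hbc1 x (Set.mem_union_right _ (subset_tsupport _ hx))]
          linarith [(hw01 x).2]
      · intro x
        rcases eq_or_ne (f x) 0 with hx | hx
        · rw [hx, zero_mul]
        · have hxK : x ∈ tsupport (⇑f) := subset_tsupport _ hx
          have hw1 : w x = 1 := hwK x hxK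
          have hxw : x ∈ tsupport (⇑w) := subset_tsupport _ (Function.mem_support.mpr (by rw [hw1]; norm_num))
          have hb1' : bc x = 1 := hbc1 x (Set.mem_union_right _ hxw)
          rw [CompactlySupportedContinuousMap.sub_apply, hb1', hw1, sub_self, mul_zero]
    have hρhw : ρ h ≤ ρ w := by
      rw [step2, step3, add_zero] at step1
      exact step1.trans_eq rfl
    have hwUle : ENNReal.ofReal (ρ w) ≤ qiOpen ρ U :=
      le_iSup₂_of_le w ⟨hw01, hwU⟩ le_rfl
    exact le_trans (ENNReal.ofReal_le_ofReal hρhw) hwUle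
  exact absurd hUT (not_lt.mpr hfinal)
end QLF
end

section
/- Let X and Y be locally compact, connected Hausdorff spaces and f ∈ C_c(X × Y). If ρ is a quasi-integral on C_c(X) with corresponding compact-finite topological measure μ, then the function T_ρ(f) : Y → ℝ, T_ρ(f)(y) = ρ(f_y), is continuous with compact support, and ‖T_ρ(f)‖∞ ≤ ‖f‖∞ · μ(π₁(supp f)), where π₁ : X × Y → X is the canonical projection. Similarly, if η is a quasi-integral on C_c(Y) with corresponding topological measure ν, then S_η(f) : X → ℝ, S_η(f)(x) = η(f_x), is continuous with compact support and ‖S_η(f)‖∞ ≤ ‖f‖∞ · ν(π₂(supp f)). -/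
open scoped ENNReal CompactlySupported
open CompactlySupportedContinuousMap

namespace QLF

section Aux

variable {Z : Type*} [TopologicalSpace Z] {ρ : C_c(Z, ℝ) → ℝ}

lemma compCc_apply (φ : C(ℝ, ℝ)) (hφ : φ 0 = 0) (f : C_c(Z, ℝ)) (x : Z) :
    compCc φ hφ f x = φ (f x) := rfl

lemma rho_zero (hρ : IsQuasiIntegral ρ) : ρ 0 = 0 := by
  have h := hρ.smul 0 0
  simpa using h

/-- Cross-algebra monotonicity: if `u = 1` wherever `v ≠ 0`, then `ρ v ≤ ρ u`. -/
lemma rho_mono_plateau (hρ : IsQuasiIntegral ρ) (u v : C_c(Z, ℝ))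
    (hv : ∀ x, 0 ≤ v x ∧ v x ≤ 1) (hu : ∀ x, 0 ≤ u x ∧ u x ≤ 1)
    (hp : ∀ x, v x ≠ 0 → u x = 1) : ρ v ≤ ρ u := by
  set s : C_c(Z, ℝ) := u + v with hs
  have hvB : InB s v := by
    refine ⟨⟨fun r => max (r - 1) 0,
      (continuous_id.sub continuous_const).max continuous_const⟩, by norm_num, fun x => ?_⟩
    show v x = max (s x - 1) 0
    have hsx : s x = u x + v x := rfl
    by_cases hx : v x = 0
    · rw [hsx, hx, max_eq_right (by linarith [(hu x).2])]
    · rw [hsx, hp x hx, max_eq_left (by linarith [(hv x).1])]; ring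
  have hdB : InB s (u - v) := by
    refine ⟨⟨fun r => min r 1 - max (r - 1) 0,
      ((continuous_id.min continuous_const).sub
        ((continuous_id.sub continuous_const).max continuous_const))⟩, by norm_num, fun x => ?_⟩
    show u x - v x = min (s x) 1 - max (s x - 1) 0
    have hsx : s x = u x + v x := rfl
    by_cases hx : v x = 0
    · rw [hsx, hx, min_eq_left (by linarith [(hu x).2]),
        max_eq_right (by linarith [(hu x).2])]; ring
    · rw [hsx, hp x hx, min_eq_right (by linarith [(hv x).1]),
        max_eq_left (by linarith [(hv x).1])]; ring
  have hadd := hρ.add s (u - v) v hdB hvB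
  rw [sub_add_cancel] at hadd
  have hpos : 0 ≤ ρ (u - v) := by
    refine hρ.pos _ fun x => ?_
    show 0 ≤ u x - v x
    by_cases hx : v x = 0
    · rw [hx]; linarith [(hu x).1]
    · rw [hp x hx]; linarith [(hv x).2]
  linarith

/-- Bound: if `0 ≤ g ≤ M` and `u = 1` wherever `g ≠ 0`, `0 ≤ u ≤ 1`, then `ρ g ≤ M * ρ u`. -/
lemma rho_le_bound (hρ : IsQuasiIntegral ρ) (g u : C_c(Z, ℝ)) (M : ℝ) (hM : 0 ≤ M)
    (hg : ∀ x, 0 ≤ g x ∧ g x ≤ M) (hu : ∀ x, 0 ≤ u x ∧ u x ≤ 1)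
    (hp : ∀ x, g x ≠ 0 → u x = 1) : ρ g ≤ M * ρ u := by
  set s : C_c(Z, ℝ) := (2 * M) • u + g with hs
  have hsx : ∀ x, s x = 2 * M * u x + g x := fun x => rfl
  have hgB : InB s g := by
    refine ⟨⟨fun r => max (r - 2 * M) 0,
      (continuous_id.sub continuous_const).max continuous_const⟩,
      max_eq_right (by linarith), fun x => ?_⟩
    show g x = max (s x - 2 * M) 0
    by_cases hx : g x = 0
    · rw [hsx, hx, max_eq_right (by nlinarith [(hu x).2, (hu x).1])]
    · rw [hsx, hp x hx, max_eq_left (by linarith [(hg x).1])]; ring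
  have hdB : InB s (M • u - g) := by
    refine ⟨⟨fun r => min r (2 * M) / 2 - max (r - 2 * M) 0,
      ((continuous_id.min continuous_const).div_const 2).sub
        ((continuous_id.sub continuous_const).max continuous_const)⟩, by
          show min (0:ℝ) (2 * M) / 2 - max (0 - 2 * M) 0 = 0
          rw [min_eq_left (by linarith), max_eq_right (by linarith)]; norm_num,
      fun x => ?_⟩
    show M * u x - g x = min (s x) (2 * M) / 2 - max (s x - 2 * M) 0
    by_cases hx : g x = 0
    · rw [hsx, hx, min_eq_left (by nlinarith [(hu x).2, (hu x).1]),
        max_eq_right (by nlinarith [(hu x).2, (hu x).1])]; ring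
    · rw [hsx, hp x hx, min_eq_right (by linarith [(hg x).1]),
        max_eq_left (by linarith [(hg x).1])]; ring
  have hadd := hρ.add s (M • u - g) g hdB hgB
  rw [sub_add_cancel] at hadd
  have hsmul := hρ.smul M u
  have hpos : 0 ≤ ρ (M • u - g) := by
    refine hρ.pos _ fun x => ?_
    show 0 ≤ M * u x - g x
    by_cases hx : g x = 0
    · rw [hx]; nlinarith [(hu x).1]
    · rw [hp x hx]; linarith [(hg x).2]
  rw [hsmul] at hadd
  linarith

/-- The truncation `(h - t)⁺` as an element of `C_c`. -/
noncomputable def cutCc (h : C_c(Z, ℝ)) (t : ℝ) (ht : 0 ≤ t) : C_c(Z, ℝ) :=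
  compCc ⟨fun r => max (r - t) 0, (continuous_id.sub continuous_const).max continuous_const⟩
    (max_eq_right (by linarith)) h

lemma cutCc_apply (h : C_c(Z, ℝ)) (t : ℝ) (ht : 0 ≤ t) (x : Z) :
    cutCc h t ht x = max (h x - t) 0 := rfl

lemma cutCc_congr (h : C_c(Z, ℝ)) {t t' : ℝ} (ht : 0 ≤ t) (e : t = t') :
    cutCc h t ht = cutCc h t' (e ▸ ht) := by subst e; rfl

lemma cutCc_zero (h : C_c(Z, ℝ)) (t : ℝ) (ht : 0 ≤ t) (hz : t = 0) (h0 : ∀ x, 0 ≤ h x) :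
    cutCc h t ht = h := by
  ext x
  rw [cutCc_apply, hz, sub_zero, max_eq_left (h0 x)]

lemma cutCc_top (h : C_c(Z, ℝ)) (t : ℝ) (ht : 0 ≤ t) (hB : ∀ x, h x ≤ t) :
    cutCc h t ht = 0 := by
  ext x
  rw [cutCc_apply, max_eq_right (by linarith [hB x])]
  rfl

/-- Fundamental layer increment identity. -/
lemma cut_increment (hρ : IsQuasiIntegral ρ) (h : C_c(Z, ℝ)) (s t : ℝ) (hs : 0 ≤ s)
    (hst : s < t) :
    ∃ w : C_c(Z, ℝ), (∀ x, 0 ≤ w x ∧ w x ≤ 1) ∧ (∀ x, w x ≠ 0 → s < h x) ∧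
      (∀ x, t ≤ h x → w x = 1) ∧
      ρ (cutCc h s hs) = ρ (cutCc h t (hs.trans hst.le)) + (t - s) * ρ w := by
  have hts : 0 < t - s := by linarith
  set ϑ : C(ℝ, ℝ) := ⟨fun r => min (max (r - s) 0) (t - s) / (t - s),
    (((continuous_id.sub continuous_const).max continuous_const).min
      continuous_const).div_const _⟩ with hϑ
  have hϑval : ∀ r : ℝ, ϑ r = min (max (r - s) 0) (t - s) / (t - s) := fun r => rfl
  have hϑ0 : ϑ 0 = 0 := by
    rw [hϑval, max_eq_right (by linarith), min_eq_left (by linarith), zero_div]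
  set w : C_c(Z, ℝ) := compCc ϑ hϑ0 h with hw
  have hwval : ∀ x, w x = min (max (h x - s) 0) (t - s) / (t - s) := fun x => rfl
  refine ⟨w, fun x => ?_, fun x hx => ?_, fun x hx => ?_, ?_⟩
  · constructor
    · rw [hwval]
      exact div_nonneg (le_min (le_max_right _ _) hts.le) hts.le
    · rw [hwval, div_le_one hts]
      exact min_le_right _ _
  · by_contra hle
    push_neg at hle
    refine hx ?_
    rw [hwval, max_eq_right (by linarith), min_eq_left (by linarith), zero_div]
  · rw [hwval, max_eq_left (by linarith), min_eq_right (by linarith), div_self hts.ne']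
  · have key : ∀ r : ℝ, max (r - s) 0 =
        max (r - t) 0 + (t - s) * (min (max (r - s) 0) (t - s) / (t - s)) := by
      intro r
      rcases le_total r s with hr | hr
      · rw [max_eq_right (show r - s ≤ 0 by linarith), max_eq_right (show r - t ≤ 0 by linarith),
          min_eq_left (by linarith : (0:ℝ) ≤ t - s), zero_div]
        ring
      · rcases le_total r t with hr2 | hr2
        · rw [max_eq_left (show 0 ≤ r - s by linarith), max_eq_right (show r - t ≤ 0 by linarith),
            min_eq_left (by linarith : r - s ≤ t - s)]
          rw [mul_comm, div_mul_cancel₀ _ hts.ne']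
          ring
        · rw [max_eq_left (show 0 ≤ r - s by linarith), max_eq_left (show 0 ≤ r - t by linarith),
            min_eq_right (by linarith : t - s ≤ r - s)]
          rw [div_self hts.ne']
          ring
    have e1 : cutCc h s hs = cutCc h t (hs.trans hst.le) + (t - s) • w := by
      ext x
      rw [CompactlySupportedContinuousMap.add_apply, CompactlySupportedContinuousMap.smul_apply, smul_eq_mul, cutCc_apply, cutCc_apply, hwval]
      exact key (h x)
    have hInB1 : InB h (cutCc h t (hs.trans hst.le)) :=
      ⟨⟨fun r => max (r - t) 0, (continuous_id.sub continuous_const).max continuous_const⟩,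
        max_eq_right (by linarith), fun x => rfl⟩
    have hInB2 : InB h ((t - s) • w) := by
      refine ⟨⟨fun r => (t - s) * ϑ r, continuous_const.mul ϑ.continuous⟩,
        by show (t - s) * ϑ 0 = 0; rw [hϑ0, mul_zero], fun x => ?_⟩
      rw [CompactlySupportedContinuousMap.smul_apply, smul_eq_mul]
      rfl
    rw [e1, hρ.add h _ _ hInB1 hInB2, hρ.smul (t - s) w]

/-- The positive part of `v` as an element of `C_c`. -/
noncomputable def posCc (v : C_c(Z, ℝ)) : C_c(Z, ℝ) :=
  compCc ⟨fun r => max r 0, continuous_id.max continuous_const⟩ (max_self 0) v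

/-- The negative part of `v` as an element of `C_c`. -/
noncomputable def negCc (v : C_c(Z, ℝ)) : C_c(Z, ℝ) :=
  compCc ⟨fun r => max (-r) 0, continuous_neg.max continuous_const⟩ (by norm_num) v

lemma posCc_apply (v : C_c(Z, ℝ)) (x : Z) : posCc v x = max (v x) 0 := rfl

lemma negCc_apply (v : C_c(Z, ℝ)) (x : Z) : negCc v x = max (-(v x)) 0 := rfl

lemma rho_posneg (hρ : IsQuasiIntegral ρ) (v : C_c(Z, ℝ)) :
    ρ v = ρ (posCc v) - ρ (negCc v) := by
  have hvB : InB v v := ⟨ContinuousMap.id ℝ, rfl, fun x => rfl⟩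
  have hnB : InB v (negCc v) :=
    ⟨⟨fun r => max (-r) 0, continuous_neg.max continuous_const⟩, by norm_num, fun x => rfl⟩
  have hadd := hρ.add v v (negCc v) hvB hnB
  have he : v + negCc v = posCc v := by
    ext x
    rw [CompactlySupportedContinuousMap.add_apply, posCc_apply, negCc_apply]
    rcases le_total (v x) 0 with hx | hx
    · rw [max_eq_right hx, max_eq_left (by linarith)]; ring
    · rw [max_eq_left hx, max_eq_right (by linarith)]; ring
  rw [he] at hadd
  linarith

end Aux

end QLF

namespace QLF

section Aux2

variable {Z : Type*} [TopologicalSpace Z] {ρ : C_c(Z, ℝ) → ℝ}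

lemma exists_abs_bound (v : C_c(Z, ℝ)) : ∃ M : ℝ, 0 ≤ M ∧ ∀ x, |v x| ≤ M := by
  obtain ⟨C, hC⟩ := v.continuous.bounded_above_of_compact_support v.hasCompactSupport
  exact ⟨max C 0, le_max_right _ _,
    fun x => le_trans (by simpa [Real.norm_eq_abs] using hC x) (le_max_left _ _)⟩

/-- One-sided Lipschitz estimate for nonnegative functions. -/
lemma rho_lipschitz_nonneg (hρ : IsQuasiIntegral ρ) (g h u : C_c(Z, ℝ)) (ε : ℝ) (hε : 0 < ε)
    (hg0 : ∀ x, 0 ≤ g x) (hh0 : ∀ x, 0 ≤ h x)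
    (hu : ∀ x, 0 ≤ u x ∧ u x ≤ 1) (hph : ∀ x, h x ≠ 0 → u x = 1)
    (hgh : ∀ x, h x ≤ g x + ε) : ρ h ≤ ρ g + 2 * ε * ρ u := by
  obtain ⟨Bg, hBg0, hBg⟩ := exists_abs_bound g
  obtain ⟨Bh, hBh0, hBh⟩ := exists_abs_bound h
  set B := max Bg Bh with hB
  have hB0 : 0 ≤ B := le_trans hBg0 (le_max_left _ _)
  have hgB : ∀ x, g x ≤ B := fun x =>
    le_trans (le_trans (le_abs_self _) (hBg x)) (le_max_left _ _)
  have hhB : ∀ x, h x ≤ B := fun x =>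
    le_trans (le_trans (le_abs_self _) (hBh x)) (le_max_right _ _)
  set N := Nat.ceil (B / ε) with hN
  have hNB : B ≤ (N : ℝ) * ε := by
    rw [← div_le_iff₀ hε]
    exact Nat.le_ceil _
  have nn : ∀ i : ℕ, (0 : ℝ) ≤ (i : ℝ) * ε := fun i => by positivity
  set A : ℕ → ℝ := fun i => ρ (cutCc h ((i : ℝ) * ε) (nn i)) with hA
  set Cg : ℕ → ℝ := fun i => ρ (cutCc g ((i : ℝ) * ε) (nn i)) with hCg
  have step : ∀ i : ℕ, A (i + 2) - A (i + 1 + 2) ≤ Cg i - Cg (i + 1) := by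
    intro i
    obtain ⟨wh, hwh01, hwhne, hwh1, ehw⟩ := cut_increment hρ h (((i + 2 : ℕ) : ℝ) * ε)
      (((i + 3 : ℕ) : ℝ) * ε) (nn (i + 2)) (by push_cast; nlinarith)
    obtain ⟨wg, hwg01, hwgne, hwg1, ehg⟩ := cut_increment hρ g (((i : ℕ) : ℝ) * ε)
      (((i + 1 : ℕ) : ℝ) * ε) (nn i) (by push_cast; nlinarith)
    have hwcmp : ρ wh ≤ ρ wg := by
      refine rho_mono_plateau hρ wg wh hwh01 hwg01 fun x hx => ?_
      refine hwg1 x ?_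
      have h1 := hwhne x hx
      have h2 := hgh x
      push_cast at h1 ⊢
      linarith
    have e1 : ((i + 3 : ℕ) : ℝ) * ε - ((i + 2 : ℕ) : ℝ) * ε = ε := by push_cast; ring
    have e2 : ((i + 1 : ℕ) : ℝ) * ε - ((i : ℕ) : ℝ) * ε = ε := by push_cast; ring
    rw [e1] at ehw
    rw [e2] at ehg
    have hA2 : A (i + 2) = ρ (cutCc h (((i + 2 : ℕ) : ℝ) * ε) (nn (i + 2))) := rfl
    have hA3 : A (i + 1 + 2) = ρ (cutCc h (((i + 3 : ℕ) : ℝ) * ε) (nn (i + 3))) := rfl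
    have hC0 : Cg i = ρ (cutCc g (((i : ℕ) : ℝ) * ε) (nn i)) := rfl
    have hC1 : Cg (i + 1) = ρ (cutCc g (((i + 1 : ℕ) : ℝ) * ε) (nn (i + 1))) := rfl
    have hmul := mul_le_mul_of_nonneg_left hwcmp hε.le
    rw [hA2, hA3, hC0, hC1, ehw, ehg]
    -- the cut terms inside ehw/ehg may carry different (propositionally equal) proofs
    simp only [add_sub_cancel_left]
    linarith [hmul]
  have hs1 := Finset.sum_range_sub' (fun i => A (i + 2)) N
  have hs2 := Finset.sum_range_sub' Cg N
  have hsum := Finset.sum_le_sum (fun i (_ : i ∈ Finset.range N) => step i)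
  rw [hs1, hs2] at hsum
  norm_num at hsum
  -- hsum : A 2 - A (N + 2) ≤ Cg 0 - Cg N
  have hAtop : A (N + 2) = 0 := by
    have hz : cutCc h (((N + 2 : ℕ) : ℝ) * ε) (nn (N + 2)) = 0 :=
      cutCc_top h _ _ (fun x => by
        have h1 := hhB x
        push_cast
        nlinarith)
    show ρ (cutCc h (((N + 2 : ℕ) : ℝ) * ε) (nn (N + 2))) = 0
    rw [hz, rho_zero hρ]
  have hCtop : Cg N = 0 := by
    have hz : cutCc g (((N : ℕ) : ℝ) * ε) (nn N) = 0 :=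
      cutCc_top g _ _ (fun x => by
        have h1 := hgB x
        nlinarith)
    show ρ (cutCc g (((N : ℕ) : ℝ) * ε) (nn N)) = 0
    rw [hz, rho_zero hρ]
  have hC0g : Cg 0 = ρ g := by
    show ρ (cutCc g (((0 : ℕ) : ℝ) * ε) (nn 0)) = ρ g
    rw [cutCc_zero g _ _ (by push_cast; ring) hg0]
  obtain ⟨w0, hw001, hw0ne, _, e0⟩ := cut_increment hρ h 0 (2 * ε) le_rfl (by linarith)
  rw [cutCc_zero h 0 le_rfl rfl hh0] at e0
  have hcgr := cutCc_congr h (show (0 : ℝ) ≤ 2 * ε by linarith) (show 2 * ε = ((2 : ℕ) : ℝ) * ε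
    by push_cast; ring)
  rw [hcgr] at e0
  have eA2 : ρ (cutCc h (((2 : ℕ) : ℝ) * ε) (nn 2)) = A 2 := rfl
  rw [eA2] at e0
  -- e0 : ρ h = A 2 + (2 * ε - 0) * ρ w0
  have hw0u : ρ w0 ≤ ρ u := by
    refine rho_mono_plateau hρ u w0 hw001 hu fun x hx => ?_
    exact hph x (ne_of_gt (hw0ne x hx))
  have hmul0 : (2 * ε) * ρ w0 ≤ (2 * ε) * ρ u :=
    mul_le_mul_of_nonneg_left hw0u (by linarith)
  have hAcmp : A 2 ≤ ρ g := by linarith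
  nlinarith [e0]

/-- Two-sided Lipschitz estimate for general compactly supported functions. -/
lemma rho_abs_sub_le (hρ : IsQuasiIntegral ρ) (g h u : C_c(Z, ℝ)) (ε : ℝ) (hε : 0 < ε)
    (hu : ∀ x, 0 ≤ u x ∧ u x ≤ 1)
    (hpg : ∀ x, g x ≠ 0 → u x = 1) (hph : ∀ x, h x ≠ 0 → u x = 1)
    (hgh : ∀ x, |g x - h x| ≤ ε) : |ρ g - ρ h| ≤ 4 * ε * ρ u := by
  have habs : ∀ a b : ℝ, |a - b| ≤ ε → max a 0 ≤ max b 0 + ε := by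
    intro a b hab
    have h1 := abs_max_sub_max_le_abs a b 0
    have h2 := abs_le.mp (le_trans h1 hab)
    have h3 := abs_le.mp hab
    linarith [h2.2]
  have hpos0 : ∀ v : C_c(Z, ℝ), ∀ x, 0 ≤ posCc v x := fun v x => le_max_right _ _
  have hneg0 : ∀ v : C_c(Z, ℝ), ∀ x, 0 ≤ negCc v x := fun v x => le_max_right _ _
  have hppg : ∀ x, posCc g x ≠ 0 → u x = 1 := fun x hx =>
    hpg x fun h0 => hx (by rw [posCc_apply, h0, max_self])
  have hpph : ∀ x, posCc h x ≠ 0 → u x = 1 := fun x hx =>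
    hph x fun h0 => hx (by rw [posCc_apply, h0, max_self])
  have hnpg : ∀ x, negCc g x ≠ 0 → u x = 1 := fun x hx =>
    hpg x fun h0 => hx (by rw [negCc_apply, h0, neg_zero, max_self])
  have hnph : ∀ x, negCc h x ≠ 0 → u x = 1 := fun x hx =>
    hph x fun h0 => hx (by rw [negCc_apply, h0, neg_zero, max_self])
  have hb1 : ∀ x, posCc h x ≤ posCc g x + ε := fun x =>
    habs _ _ (by rw [abs_sub_comm]; exact hgh x)
  have hb2 : ∀ x, posCc g x ≤ posCc h x + ε := fun x => habs _ _ (hgh x)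
  have hb3 : ∀ x, negCc h x ≤ negCc g x + ε := fun x =>
    habs (-(h x)) (-(g x)) (by rw [neg_sub_neg]; exact hgh x)
  have hb4 : ∀ x, negCc g x ≤ negCc h x + ε := fun x =>
    habs (-(g x)) (-(h x)) (by rw [neg_sub_neg, abs_sub_comm]; exact hgh x)
  have h1 := rho_lipschitz_nonneg hρ (posCc g) (posCc h) u ε hε (hpos0 g) (hpos0 h) hu hpph hb1
  have h2 := rho_lipschitz_nonneg hρ (posCc h) (posCc g) u ε hε (hpos0 h) (hpos0 g) hu hppg hb2
  have h3 := rho_lipschitz_nonneg hρ (negCc g) (negCc h) u ε hε (hneg0 g) (hneg0 h) hu hnph hb3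
  have h4 := rho_lipschitz_nonneg hρ (negCc h) (negCc g) u ε hε (hneg0 h) (hneg0 g) hu hnpg hb4
  rw [rho_posneg hρ g, rho_posneg hρ h, abs_le]
  constructor <;> linarith

/-- `|ρ v| ≤ M ρ(u)` when `|v| ≤ M` and `u` is one on the support of `v`. -/
lemma rho_abs_le (hρ : IsQuasiIntegral ρ) (v u : C_c(Z, ℝ)) (M : ℝ) (hM : 0 ≤ M)
    (hv : ∀ x, |v x| ≤ M) (hu : ∀ x, 0 ≤ u x ∧ u x ≤ 1)
    (hp : ∀ x, v x ≠ 0 → u x = 1) : |ρ v| ≤ M * ρ u := by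
  have hP := rho_le_bound hρ (posCc v) u M hM
    (fun x => ⟨le_max_right _ _, max_le (le_trans (le_abs_self _) (hv x)) hM⟩) hu
    (fun x hx => hp x fun h0 => hx (by rw [posCc_apply, h0, max_self]))
  have hN := rho_le_bound hρ (negCc v) u M hM
    (fun x => ⟨le_max_right _ _, max_le (le_trans (neg_le_abs _) (hv x)) hM⟩) hu
    (fun x hx => hp x fun h0 => hx (by rw [negCc_apply, h0, neg_zero, max_self]))
  have hP0 := hρ.pos (posCc v) fun x => le_max_right _ _
  have hN0 := hρ.pos (negCc v) fun x => le_max_right _ _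
  rw [rho_posneg hρ v, abs_le]
  constructor <;> linarith

end Aux2

/-- Existence of plateau functions. -/
lemma exists_plateau {W : Type*} [TopologicalSpace W] [LocallyCompactSpace W] [T2Space W]
    {K U : Set W} (hK : IsCompact K) (hU : IsOpen U) (hKU : K ⊆ U) :
    ∃ u : C_c(W, ℝ), (∀ x, 0 ≤ u x ∧ u x ≤ 1) ∧ (∀ x ∈ K, u x = 1) ∧ tsupport ⇑u ⊆ U := by
  obtain ⟨L, L_comp, L_closed, hKL, hLU⟩ := exists_compact_closed_between hK hU hKU
  obtain ⟨φ, hφ1, hφ0, hφc, hφ01⟩ :=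
    exists_continuous_one_zero_of_isCompact hK isOpen_interior.isClosed_compl
      (Set.disjoint_compl_right_iff_subset.mpr hKL)
  refine ⟨⟨φ, hφc⟩, fun x => ⟨(hφ01 x).1, (hφ01 x).2⟩, fun x hx => by simpa using hφ1 hx, ?_⟩
  have hsub : Function.support ⇑φ ⊆ interior L := by
    intro x hx
    by_contra hxx
    exact hx (by simpa using hφ0 hxx)
  calc tsupport ⇑(⟨φ, hφc⟩ : C_c(W, ℝ)) = closure (Function.support ⇑φ) := rfl
    _ ⊆ closure (interior L) := closure_mono hsub
    _ ⊆ L := closure_minimal interior_subset L_closed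
    _ ⊆ U := hLU

end QLF

namespace QLF

/-- The main workhorse: one half of the statement, for the first coordinate. -/
theorem half {X Y : Type*} [TopologicalSpace X] [LocallyCompactSpace X] [T2Space X]
    [TopologicalSpace Y] [T2Space Y] (f : C_c(X × Y, ℝ)) (ρ : C_c(X, ℝ) → ℝ) (hρ : IsQuasiIntegral ρ) :
    Continuous (Tmap ρ f) ∧ HasCompactSupport (Tmap ρ f) ∧
      (⨆ y, ENNReal.ofReal |Tmap ρ f y|) ≤
        (⨆ z, ENNReal.ofReal |f z|) * qiMeas ρ (Prod.fst '' tsupport f) := by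
  set K : Set X := Prod.fst '' tsupport f with hK
  have hKc : IsCompact K := f.hasCompactSupport'.image continuous_fst
  have hfK : ∀ (y : Y) (x : X), f (x, y) ≠ 0 → x ∈ K := fun y x hx =>
    ⟨(x, y), subset_tsupport _ hx, rfl⟩
  -- compact support
  have hsupp : HasCompactSupport (Tmap ρ f) := by
    refine HasCompactSupport.intro (f.hasCompactSupport'.image continuous_snd) fun y hy => ?_
    have hz : fiberY f y = 0 := by
      ext x
      show f (x, y) = 0
      by_contra hc
      exact hy ⟨(x, y), subset_tsupport _ hc, rfl⟩
    show ρ (fiberY f y) = 0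
    rw [hz, rho_zero hρ]
  -- continuity
  obtain ⟨u₀, hu₀01, hu₀K, -⟩ := exists_plateau hKc isOpen_univ (Set.subset_univ K)
  have hρu₀ : 0 ≤ ρ u₀ := hρ.pos u₀ fun x => (hu₀01 x).1
  set g : C(Y × X, ℝ) := (f : C(X × Y, ℝ)).comp ⟨Prod.swap, continuous_swap⟩ with hg
  have hcont : Continuous (Tmap ρ f) := by
    rw [continuous_iff_continuousAt]
    intro y₀
    unfold ContinuousAt
    rw [Metric.tendsto_nhds]
    intro ε hε
    have hδ : 0 < ε / (4 * (ρ u₀ + 1)) := by positivity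
    set δ := ε / (4 * (ρ u₀ + 1)) with hδdef
    have huc := (ContinuousMap.tendsto_iff_forall_isCompact_tendstoUniformlyOn.mp
      (g.curry.continuous.tendsto y₀)) K hKc
    rw [Metric.tendstoUniformlyOn_iff] at huc
    filter_upwards [huc δ hδ] with y hy
    have hptw : ∀ x, |fiberY f y x - fiberY f y₀ x| ≤ δ := by
      intro x
      by_cases hx : x ∈ K
      · have h1 := hy x hx
        rw [Real.dist_eq] at h1
        have h2 : |f (x, y) - f (x, y₀)| < δ := by
          rw [abs_sub_comm]
          exact h1
        exact h2.le
      · have h1 : f (x, y) = 0 := by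
          by_contra hc
          exact hx (hfK y x hc)
        have h2 : f (x, y₀) = 0 := by
          by_contra hc
          exact hx (hfK y₀ x hc)
        show |f (x, y) - f (x, y₀)| ≤ δ
        rw [h1, h2]
        simpa using hδ.le
    have hb := rho_abs_sub_le hρ (fiberY f y) (fiberY f y₀) u₀ δ hδ hu₀01
      (fun x hx => hu₀K x (hfK y x hx)) (fun x hx => hu₀K x (hfK y₀ x hx)) hptw
    rw [Real.dist_eq]
    calc |Tmap ρ f y - Tmap ρ f y₀| ≤ 4 * δ * ρ u₀ := hb
      _ = ε * (4 * ρ u₀) / (4 * (ρ u₀ + 1)) := by rw [hδdef]; ring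
      _ < ε := by
          rw [div_lt_iff₀ (by positivity)]
          nlinarith
  -- the norm bound
  refine ⟨hcont, hsupp, ?_⟩
  set S : ℝ≥0∞ := ⨆ z, ENNReal.ofReal |f z| with hS
  obtain ⟨C, hC0, hC⟩ := exists_abs_bound f
  have hSne : S ≠ ⊤ := by
    have hle : S ≤ ENNReal.ofReal C :=
      iSup_le fun z => ENNReal.ofReal_le_ofReal (hC z)
    exact ne_top_of_le_ne_top ENNReal.ofReal_ne_top hle
  set M := S.toReal with hM
  have hM0 : 0 ≤ M := ENNReal.toReal_nonneg
  have hSof : ENNReal.ofReal M = S := ENNReal.ofReal_toReal hSne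
  have hfM : ∀ z, |f z| ≤ M := by
    intro z
    have h1 : ENNReal.ofReal |f z| ≤ S := le_iSup (fun z => ENNReal.ofReal |f z|) z
    exact (ENNReal.ofReal_le_iff_le_toReal hSne).mp h1
  have key : ∀ U : Set X, IsOpen U → K ⊆ U →
      (⨆ y, ENNReal.ofReal |Tmap ρ f y|) ≤ S * qiOpen ρ U := by
    intro U hU hKU
    obtain ⟨u, hu01, huK, husupp⟩ := exists_plateau hKc hU hKU
    have hρu : 0 ≤ ρ u := hρ.pos u fun x => (hu01 x).1
    refine iSup_le fun y => ?_
    have hy : |ρ (fiberY f y)| ≤ M * ρ u :=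
      rho_abs_le hρ (fiberY f y) u M hM0 (fun x => hfM (x, y)) hu01
        (fun x hx => huK x (hfK y x hx))
    calc ENNReal.ofReal |Tmap ρ f y| ≤ ENNReal.ofReal (M * ρ u) := ENNReal.ofReal_le_ofReal hy
      _ = ENNReal.ofReal M * ENNReal.ofReal (ρ u) := ENNReal.ofReal_mul hM0
      _ ≤ S * qiOpen ρ U := by
          rw [← hSof]
          refine mul_le_mul_right ?_ _
          exact le_iSup₂ (f := fun (v : C_c(X, ℝ))
            (_ : (∀ x, 0 ≤ v x ∧ v x ≤ 1) ∧ tsupport v ⊆ U) => ENNReal.ofReal (ρ v)) u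
            ⟨hu01, husupp⟩
  by_cases hKopen : IsOpen K
  · have h1 := key K hKopen subset_rfl
    unfold qiMeas
    rwa [if_pos hKopen]
  · unfold qiMeas
    rw [if_neg hKopen]
    have hrw : (⨅ (U : Set X) (_ : IsOpen U ∧ K ⊆ U), qiOpen ρ U) =
        ⨅ (U : {U : Set X // IsOpen U ∧ K ⊆ U}), qiOpen ρ U.1 :=
      (iInf_subtype (p := fun U : Set X => IsOpen U ∧ K ⊆ U)
        (f := fun U : {U : Set X // IsOpen U ∧ K ⊆ U} => qiOpen ρ U.1)).symm
    rw [hrw, ENNReal.mul_iInf' (fun hS' => absurd hS' hSne)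
      (fun _ => ⟨⟨Set.univ, isOpen_univ, Set.subset_univ _⟩⟩)]
    exact le_iInf fun U => key U.1 U.2.1 U.2.2

/-- Swap the coordinates of a compactly supported function on a product. -/
noncomputable def swapCc {X Y : Type*} [TopologicalSpace X] [TopologicalSpace Y]
    (f : C_c(X × Y, ℝ)) : C_c(Y × X, ℝ) :=
  ⟨(f : C(X × Y, ℝ)).comp ⟨Prod.swap, continuous_swap⟩,
    f.hasCompactSupport'.comp_homeomorph (Homeomorph.prodComm Y X)⟩

end QLF

namespace QLF
theorem statement3 {X Y : Type*}
    [TopologicalSpace X] [LocallyCompactSpace X] [T2Space X] [ConnectedSpace X]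
    [TopologicalSpace Y] [LocallyCompactSpace Y] [T2Space Y] [ConnectedSpace Y]
    (f : C_c(X × Y, ℝ)) (ρ : C_c(X, ℝ) → ℝ) (η : C_c(Y, ℝ) → ℝ)
    (hρ : IsQuasiIntegral ρ) (hη : IsQuasiIntegral η) :
    (Continuous (Tmap ρ f) ∧ HasCompactSupport (Tmap ρ f) ∧
      (⨆ y, ENNReal.ofReal |Tmap ρ f y|) ≤
        (⨆ z, ENNReal.ofReal |f z|) * qiMeas ρ (Prod.fst '' tsupport f)) ∧
    (Continuous (Smap η f) ∧ HasCompactSupport (Smap η f) ∧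
      (⨆ x, ENNReal.ofReal |Smap η f x|) ≤
        (⨆ z, ENNReal.ofReal |f z|) * qiMeas η (Prod.snd '' tsupport f)) := by
  constructor
  · exact half f ρ hρ
  · obtain ⟨h1, h2, h3⟩ := half (swapCc f) η hη
    have hsm : Smap η f = Tmap η (swapCc f) := by
      funext x
      show η (fiberX f x) = η (fiberY (swapCc f) x)
      congr 1
    have himg : Prod.fst '' tsupport (swapCc f) = Prod.snd '' tsupport f := by
      have hts : tsupport ⇑(swapCc f) =
          ⇑(Homeomorph.prodComm Y X) ⁻¹' tsupport ⇑f := by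
        have he : ⇑(swapCc f) = ⇑f ∘ ⇑(Homeomorph.prodComm Y X) := rfl
        rw [he]
        simp only [tsupport]
        rw [Function.support_comp_eq_preimage]
        exact (Homeomorph.preimage_closure _ _).symm
      rw [hts]
      ext x
      constructor
      · rintro ⟨p, hp, rfl⟩
        exact ⟨p.swap, hp, rfl⟩
      · rintro ⟨q, hq, rfl⟩
        exact ⟨q.swap, hq, rfl⟩
    have hsup : (⨆ z : Y × X, ENNReal.ofReal |swapCc f z|) =
        ⨆ z : X × Y, ENNReal.ofReal |f z| := by
      apply le_antisymm
      · exact iSup_le fun z => le_iSup (fun w : X × Y => ENNReal.ofReal |f w|) z.swap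
      · exact iSup_le fun z => le_iSup (fun w : Y × X => ENNReal.ofReal |swapCc f w|) z.swap
    rw [hsm, ← hsup, ← himg]
    exact ⟨h1, h2, h3⟩
end QLF
end
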